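/- Let G and H be nonzero formal power series in ℝ[[ρ,θ]] whose common vertices satisfy the non-vanishing condition for addition, and suppose ℘(Δ(H)) ⊆ ℘(Δ(G)) (i.e. the Newton polygon of H lies above that of G). Then ℘(Δ(G+H)) = ℘(Δ(G)); in particular the Newton polygon of G+H equals the Newton polygon of G. -/

import Mathlib

open scoped Pointwise

/-- The coefficient of `ρ^i θ^j` in a formal power series in two variables over `ℝ`. -/
noncomputable def coef (F : MvPowerSeries (Fin 2) ℝ) (p : ℕ × ℕ) : ℝ :=
  MvPowerSeries.coeff (R := ℝ) (Finsupp.single (0 : Fin 2) p.1 + Finsupp.single (1 : Fin 2) p.2) F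

/-- The support (valid index set) `Δ(F)` of a power series. -/
noncomputable def suppSet (F : MvPowerSeries (Fin 2) ℝ) : Set (ℕ × ℕ) :=
  {p | coef F p ≠ 0}

/-- Embedding of lattice indices into `ℝ²`. -/
noncomputable def embed (p : ℕ × ℕ) : ℝ × ℝ := ((p.1 : ℝ), (p.2 : ℝ))

/-- The lower convex semi-hull `℘(S) = conv(S + ℝ≥0²)` of a set of lattice points. -/
noncomputable def lsh (S : Set (ℕ × ℕ)) : Set (ℝ × ℝ) :=
  convexHull ℝ (embed '' S + {q : ℝ × ℝ | 0 ≤ q.1 ∧ 0 ≤ q.2})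

/-- The vertex set `Δ^V(F)` of the Newton polygon. -/
noncomputable def vertexSet (F : MvPowerSeries (Fin 2) ℝ) : Set (ℕ × ℕ) :=
  {p | embed p ∈ (lsh (suppSet F)).extremePoints ℝ}

/-- The set `Λ^V(G\H)` of vanishing common vertices. -/
noncomputable def lamV (G H : MvPowerSeries (Fin 2) ℝ) : Set (ℕ × ℕ) :=
  {p | p ∈ vertexSet G ∧ p ∈ suppSet H ∧ coef G p + coef H p = 0}

/-! ### Auxiliary material -/

noncomputable def QQ : Set (ℝ × ℝ) := {q : ℝ × ℝ | 0 ≤ q.1 ∧ 0 ≤ q.2}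

lemma lsh_eq (S : Set (ℕ × ℕ)) : lsh S = convexHull ℝ (embed '' S + QQ) := rfl

lemma QQ_zero : (0 : ℝ × ℝ) ∈ QQ := ⟨le_refl 0, le_refl 0⟩

lemma QQ_convex : Convex ℝ QQ := by
  intro x hx y hy a b ha hb hab
  constructor <;> simp only [Prod.smul_fst, Prod.smul_snd, Prod.fst_add, Prod.snd_add,
    smul_eq_mul] <;> nlinarith [hx.1, hx.2, hy.1, hy.2]

lemma QQ_add_mem {q r : ℝ × ℝ} (hq : q ∈ QQ) (hr : r ∈ QQ) : q + r ∈ QQ :=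
  ⟨by simpa using add_nonneg hq.1 hr.1, by simpa using add_nonneg hq.2 hr.2⟩

lemma QQ_addQQ : QQ + QQ = QQ := by
  apply Set.Subset.antisymm
  · rintro x ⟨q, hq, r, hr, rfl⟩; exact QQ_add_mem hq hr
  · intro q hq; exact ⟨q, hq, 0, QQ_zero, by simp⟩

lemma convexHull_QQ : convexHull ℝ QQ = QQ := QQ_convex.convexHull_eq

/-- upward closure of hulls of `B + QQ` -/
lemma addQ (B : Set (ℝ × ℝ)) {x : ℝ × ℝ} (hx : x ∈ convexHull ℝ (B + QQ)) {q : ℝ × ℝ}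
    (hq : q ∈ QQ) : x + q ∈ convexHull ℝ (B + QQ) := by
  have h : convexHull ℝ (B + QQ) + QQ = convexHull ℝ (B + QQ) :=
    calc convexHull ℝ (B + QQ) + QQ
        = convexHull ℝ (B + QQ) + convexHull ℝ QQ := by rw [convexHull_QQ]
      _ = convexHull ℝ (B + QQ + QQ) := (convexHull_add _ _).symm
      _ = convexHull ℝ (B + QQ) := by rw [add_assoc, QQ_addQQ]
  exact h ▸ (Set.add_mem_add hx hq)

lemma coef_add' (G H : MvPowerSeries (Fin 2) ℝ) (p : ℕ × ℕ) :
    coef (G + H) p = coef G p + coef H p := by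
  unfold coef; exact map_add (MvPowerSeries.coeff (R := ℝ) _) _ _

lemma mem_lsh_of_mem {S : Set (ℕ × ℕ)} {p : ℕ × ℕ} (h : p ∈ S) : embed p ∈ lsh S := by
  rw [lsh_eq]
  exact subset_convexHull ℝ _
    (by simpa using Set.add_mem_add (Set.mem_image_of_mem embed h) QQ_zero)

lemma suppSet_nonempty {G : MvPowerSeries (Fin 2) ℝ} (hG : G ≠ 0) : (suppSet G).Nonempty := by
  by_contra h
  apply hG
  ext d
  rw [Set.not_nonempty_iff_eq_empty, Set.eq_empty_iff_forall_notMem] at h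
  have h2 := h (d 0, d 1)
  simp only [suppSet, Set.mem_setOf_eq, not_not] at h2
  have hd : Finsupp.single (0 : Fin 2) (d 0) + Finsupp.single (1 : Fin 2) (d 1) = d := by
    ext a
    fin_cases a <;> simp [Finsupp.single_apply]
  rw [coef] at h2
  rw [hd] at h2
  simpa using h2

lemma extreme_mono {s t : Set (ℝ × ℝ)} (hst : s ⊆ t) {x : ℝ × ℝ} (hx : x ∈ s)
    (hxt : x ∈ t.extremePoints ℝ) : x ∈ s.extremePoints ℝ := by
  rw [mem_extremePoints] at hxt ⊢
  exact ⟨hx, fun x₁ h₁ x₂ h₂ hseg => hxt.2 x₁ (hst h₁) x₂ (hst h₂) hseg⟩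

lemma corner_extreme (b : ℝ × ℝ) : b ∈ ({b} + QQ).extremePoints ℝ := by
  rw [mem_extremePoints]
  constructor
  · exact ⟨b, rfl, 0, QQ_zero, by simp⟩
  · rintro x₁ hx₁ x₂ hx₂ ⟨a, c, ha, hc, hac, heq⟩
    rw [Set.singleton_add] at hx₁ hx₂
    obtain ⟨q₁, hq₁, rfl⟩ := hx₁
    obtain ⟨q₂, hq₂, rfl⟩ := hx₂
    have h1 : a * q₁.1 + c * q₂.1 = 0 ∧ a * q₁.2 + c * q₂.2 = 0 := by
      have e1 := congrArg Prod.fst heq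
      have e2 := congrArg Prod.snd heq
      simp only [Prod.fst_add, Prod.snd_add, Prod.smul_fst, Prod.smul_snd, smul_eq_mul] at e1 e2
      constructor
      · linear_combination e1 - b.1 * hac
      · linear_combination e2 - b.2 * hac
    have hq10 : q₁ = 0 := by
      have : q₁.1 = 0 ∧ q₁.2 = 0 := by
        constructor <;> nlinarith [hq₁.1, hq₁.2, hq₂.1, hq₂.2, h1.1, h1.2,
          mul_nonneg ha.le hq₁.1, mul_nonneg hc.le hq₂.1, mul_nonneg ha.le hq₁.2,
          mul_nonneg hc.le hq₂.2]
      exact Prod.ext this.1 this.2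
    have hq20 : q₂ = 0 := by
      have : q₂.1 = 0 ∧ q₂.2 = 0 := by
        constructor <;> nlinarith [hq₁.1, hq₁.2, hq₂.1, hq₂.2, h1.1, h1.2,
          mul_nonneg ha.le hq₁.1, mul_nonneg hc.le hq₂.1, mul_nonneg ha.le hq₁.2,
          mul_nonneg hc.le hq₂.2]
      exact Prod.ext this.1 this.2
    simp [hq10, hq20]

lemma removal (b : ℝ × ℝ) (A' : Set (ℝ × ℝ)) (hA'ne : A'.Nonempty)
    (hup : ∀ x ∈ convexHull ℝ A', ∀ q ∈ QQ, x + q ∈ convexHull ℝ A')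
    (hb : b ∉ (convexHull ℝ (({b} + QQ) ∪ A')).extremePoints ℝ) :
    b ∈ convexHull ℝ A' := by
  set P := convexHull ℝ (({b} + QQ) ∪ A') with hP
  have hbQ : b ∈ ({b} : Set (ℝ × ℝ)) + QQ := ⟨b, rfl, 0, QQ_zero, by simp⟩
  have hbP : b ∈ P := subset_convexHull ℝ _ (Set.mem_union_left _ hbQ)
  have hjoin : P = convexJoin ℝ ({b} + QQ) (convexHull ℝ A') := by
    rw [hP, convexHull_union (⟨b, hbQ⟩) hA'ne,
      (Convex.add (convex_singleton b) QQ_convex).convexHull_eq]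
  rw [mem_extremePoints] at hb
  push_neg at hb
  obtain ⟨x₁, hx₁P, x₂, hx₂P, hseg, hne⟩ := hb hbP
  rw [hjoin, mem_convexJoin] at hx₁P hx₂P
  obtain ⟨u₁, hu₁, v₁, hv₁, a₁, c₁, ha₁, hc₁, hac₁, rfl⟩ := hx₁P
  obtain ⟨u₂, hu₂, v₂, hv₂, a₂, c₂, ha₂, hc₂, hac₂, rfl⟩ := hx₂P
  rw [Set.singleton_add] at hu₁ hu₂
  obtain ⟨q₁, hq₁, rfl⟩ := hu₁
  obtain ⟨q₂, hq₂, rfl⟩ := hu₂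
  obtain ⟨t, s, ht, hs, hts, hmain⟩ := hseg
  have e1 := congrArg Prod.fst hmain
  have e2 := congrArg Prod.snd hmain
  simp only [Prod.fst_add, Prod.snd_add, Prod.smul_fst, Prod.smul_snd, smul_eq_mul] at e1 e2
  have hγ0 : 0 ≤ t * c₁ + s * c₂ := by positivity
  rcases eq_or_lt_of_le hγ0 with hγeq | hγpos
  · -- t*c₁ + s*c₂ = 0 : c₁ = c₂ = 0, contradiction with non-extremality
    exfalso
    have hc₁0 : c₁ = 0 := by nlinarith [mul_nonneg ht.le hc₁, mul_nonneg hs.le hc₂]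
    have hc₂0 : c₂ = 0 := by nlinarith [mul_nonneg ht.le hc₁, mul_nonneg hs.le hc₂]
    have ha₁1 : a₁ = 1 := by linarith
    have ha₂1 : a₂ = 1 := by linarith
    subst hc₁0; subst hc₂0; subst ha₁1; subst ha₂1
    simp only [one_mul, zero_mul, add_zero, mul_zero] at e1 e2
    have key1 : t * q₁.1 + s * q₂.1 = 0 := by linear_combination e1 - b.1 * hts
    have key2 : t * q₁.2 + s * q₂.2 = 0 := by linear_combination e2 - b.2 * hts
    have hq₁0 : q₁ = 0 := by
      refine Prod.ext ?_ ?_ <;> simp only [Prod.fst_zero, Prod.snd_zero] <;>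
        nlinarith [hq₁.1, hq₁.2, hq₂.1, hq₂.2, mul_nonneg ht.le hq₁.1,
          mul_nonneg hs.le hq₂.1, mul_nonneg ht.le hq₁.2, mul_nonneg hs.le hq₂.2]
    have hq₂0 : q₂ = 0 := by
      refine Prod.ext ?_ ?_ <;> simp only [Prod.fst_zero, Prod.snd_zero] <;>
        nlinarith [hq₁.1, hq₁.2, hq₂.1, hq₂.2, mul_nonneg ht.le hq₁.1,
          mul_nonneg hs.le hq₂.1, mul_nonneg ht.le hq₁.2, mul_nonneg hs.le hq₂.2]
    apply hne <;> simp [hq₁0, hq₂0]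
  · -- γ > 0
    obtain ⟨γ, hγ⟩ : ∃ γ : ℝ, γ = t * c₁ + s * c₂ := ⟨_, rfl⟩
    rw [← hγ] at hγpos hγ0
    have hγne : γ ≠ 0 := ne_of_gt hγpos
    have E1 : γ * b.1 = (t*c₁)*v₁.1 + (s*c₂)*v₂.1 + ((t*a₁)*q₁.1 + (s*a₂)*q₂.1) := by
      rw [hγ]; linear_combination -e1 + t*b.1*hac₁ + s*b.1*hac₂ + b.1*hts
    have E2 : γ * b.2 = (t*c₁)*v₁.2 + (s*c₂)*v₂.2 + ((t*a₁)*q₁.2 + (s*a₂)*q₂.2) := by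
      rw [hγ]; linear_combination -e2 + t*b.2*hac₁ + s*b.2*hac₂ + b.2*hts
    have hwsum : t*c₁/γ + s*c₂/γ = 1 := by
      rw [← add_div, hγ, div_self]; rw [← hγ]; exact hγne
    have hvmem : (t*c₁/γ) • v₁ + (s*c₂/γ) • v₂ ∈ convexHull ℝ A' :=
      (convex_convexHull ℝ A') hv₁ hv₂ (div_nonneg (mul_nonneg ht.le hc₁) hγ0)
        (div_nonneg (mul_nonneg hs.le hc₂) hγ0) hwsum
    have hqmem : γ⁻¹ • ((t*a₁) • q₁ + (s*a₂) • q₂) ∈ QQ := by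
      constructor <;>
        simp only [Prod.smul_fst, Prod.smul_snd, Prod.fst_add, Prod.snd_add, smul_eq_mul]
      · exact mul_nonneg (inv_nonneg.mpr hγ0)
          (add_nonneg (mul_nonneg (mul_nonneg ht.le ha₁) hq₁.1)
            (mul_nonneg (mul_nonneg hs.le ha₂) hq₂.1))
      · exact mul_nonneg (inv_nonneg.mpr hγ0)
          (add_nonneg (mul_nonneg (mul_nonneg ht.le ha₁) hq₁.2)
            (mul_nonneg (mul_nonneg hs.le ha₂) hq₂.2))
    have hbeq : b = ((t*c₁/γ) • v₁ + (s*c₂/γ) • v₂) + γ⁻¹ • ((t*a₁) • q₁ + (s*a₂) • q₂) := by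
      have h1 : b.1 = γ⁻¹ * (γ * b.1) := by rw [← mul_assoc, inv_mul_cancel₀ hγne, one_mul]
      have h2 : b.2 = γ⁻¹ * (γ * b.2) := by rw [← mul_assoc, inv_mul_cancel₀ hγne, one_mul]
      refine Prod.ext ?_ ?_ <;>
        simp only [Prod.smul_fst, Prod.smul_snd, Prod.fst_add, Prod.snd_add, smul_eq_mul]
      · rw [h1, E1]; ring
      · rw [h2, E2]; ring
    rw [hbeq]
    exact hup _ hvmem _ hqmem

/-! ### Minimal points -/

def minSet (S : Set (ℕ × ℕ)) : Set (ℕ × ℕ) :=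
  {m ∈ S | ∀ s ∈ S, s ≤ m → s = m}

lemma exists_min (S : Set (ℕ × ℕ)) : ∀ n : ℕ, ∀ s ∈ S, s.1 + s.2 = n →
    ∃ m ∈ minSet S, m ≤ s := by
  intro n
  induction n using Nat.strong_induction_on with
  | _ n ih =>
    intro s hs hn
    by_cases hmin : ∀ s' ∈ S, s' ≤ s → s' = s
    · exact ⟨s, ⟨hs, hmin⟩, le_refl s⟩
    · push_neg at hmin
      obtain ⟨s', hs', hle, hne⟩ := hmin
      have hlt : s'.1 + s'.2 < n := by
        rcases Prod.le_def.mp hle with ⟨h1, h2⟩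
        rcases Nat.lt_or_ge (s'.1 + s'.2) n with h | h
        · exact h
        · exfalso; apply hne
          have : s'.1 = s.1 ∧ s'.2 = s.2 := by omega
          exact Prod.ext this.1 this.2
      obtain ⟨m, hm, hmle⟩ := ih _ hlt s' hs' rfl
      exact ⟨m, hm, le_trans hmle hle⟩

lemma minSet_antichain {S : Set (ℕ × ℕ)} {m m' : ℕ × ℕ} (hm : m ∈ minSet S)
    (hm' : m' ∈ minSet S) (h : m ≤ m') : m = m' :=
  hm'.2 m hm.1 h

lemma minSet_finite (S : Set (ℕ × ℕ)) (hS : S.Nonempty) : (minSet S).Finite := by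
  obtain ⟨s₀, hs₀⟩ := hS
  obtain ⟨m₀, hm₀, _⟩ := exists_min S _ s₀ hs₀ rfl
  have hsub : minSet S ⊆ {m ∈ minSet S | m.1 < m₀.1} ∪ {m ∈ minSet S | m.2 < m₀.2} ∪ {m₀} := by
    intro m hm
    by_cases hEq : m = m₀
    · exact Set.mem_union_right _ (by simp [hEq])
    · have : ¬ (m₀ ≤ m) := fun hle => hEq ((minSet_antichain hm₀ hm hle).symm)
      rw [Prod.le_def, not_and_or] at this
      rcases this with h | h
      · exact Set.mem_union_left _ (Set.mem_union_left _ ⟨hm, by omega⟩)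
      · exact Set.mem_union_left _ (Set.mem_union_right _ ⟨hm, by omega⟩)
  refine Set.Finite.subset (Set.Finite.union (Set.Finite.union ?_ ?_) (Set.finite_singleton _))
    hsub
  · apply Set.Finite.of_finite_image (f := Prod.fst)
    · apply Set.Finite.subset (Set.finite_Iio m₀.1)
      rintro _ ⟨m, ⟨_, hmlt⟩, rfl⟩
      exact hmlt
    · rintro m ⟨hm, _⟩ m' ⟨hm', _⟩ hfst
      rcases le_total m.2 m'.2 with h | h
      · exact minSet_antichain hm hm' (Prod.le_def.mpr ⟨le_of_eq hfst, h⟩)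
      · exact (minSet_antichain hm' hm (Prod.le_def.mpr ⟨le_of_eq hfst.symm, h⟩)).symm
  · apply Set.Finite.of_finite_image (f := Prod.snd)
    · apply Set.Finite.subset (Set.finite_Iio m₀.2)
      rintro _ ⟨m, ⟨_, hmlt⟩, rfl⟩
      exact hmlt
    · rintro m ⟨hm, _⟩ m' ⟨hm', _⟩ hsnd
      rcases le_total m.1 m'.1 with h | h
      · exact minSet_antichain hm hm' (Prod.le_def.mpr ⟨h, le_of_eq hsnd⟩)
      · exact (minSet_antichain hm' hm (Prod.le_def.mpr ⟨h, le_of_eq hsnd.symm⟩)).symm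

lemma embed_sub_mem_QQ {m s : ℕ × ℕ} (h : m ≤ s) {q : ℝ × ℝ} (hq : q ∈ QQ) :
    embed s - embed m + q ∈ QQ := by
  rcases Prod.le_def.mp h with ⟨h1, h2⟩
  constructor
  · simp only [embed, Prod.fst_add, Prod.fst_sub]
    have : (m.1 : ℝ) ≤ (s.1 : ℝ) := Nat.cast_le.mpr h1
    linarith [hq.1]
  · simp only [embed, Prod.snd_add, Prod.snd_sub]
    have : (m.2 : ℝ) ≤ (s.2 : ℝ) := Nat.cast_le.mpr h2
    linarith [hq.2]

/-- The hull over the minimal points is the whole `lsh`. -/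
lemma hull_minSet (S : Set (ℕ × ℕ)) :
    convexHull ℝ (embed '' minSet S + QQ) = lsh S := by
  apply Set.Subset.antisymm
  · apply convexHull_mono
    exact Set.add_subset_add (Set.image_mono (fun m hm => hm.1)) (le_refl QQ)
  · rw [lsh_eq]
    apply convexHull_min _ (convex_convexHull ℝ _)
    rintro x hx
    obtain ⟨y, ⟨p, hp, rfl⟩, q, hq, rfl⟩ := Set.mem_add.mp hx
    obtain ⟨m, hm, hmle⟩ := exists_min S _ p hp rfl
    apply subset_convexHull ℝ
    refine Set.mem_add.mpr ⟨embed m, Set.mem_image_of_mem embed hm,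
      embed p - embed m + q, embed_sub_mem_QQ hmle hq, by abel⟩

lemma lsh_convex (S : Set (ℕ × ℕ)) : Convex ℝ (lsh S) := convex_convexHull ℝ _

/-- if the Newton polygon of `H` lies above that of `G`
(`℘(Δ(H)) ⊆ ℘(Δ(G))`) and common vertices are non-vanishing for addition, then
`℘(Δ(G+H)) = ℘(Δ(G))`; in particular `N_{G+H} = N_G`. -/
theorem lsh_support_add_of_above (G H : MvPowerSeries (Fin 2) ℝ) (hG : G ≠ 0) (hH : H ≠ 0)
    (hnv : lamV G H ∩ lamV H G = ∅)
    (habove : lsh (suppSet H) ⊆ lsh (suppSet G)) :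
    lsh (suppSet (G + H)) = lsh (suppSet G) := by
  have hupG : ∀ x ∈ lsh (suppSet G), ∀ q ∈ QQ, x + q ∈ lsh (suppSet G) := by
    rw [lsh_eq]; exact fun x hx q hq => addQ _ hx hq
  -- forward inclusion
  have fwd : lsh (suppSet (G + H)) ⊆ lsh (suppSet G) := by
    rw [lsh_eq (suppSet (G + H))]
    apply convexHull_min _ (lsh_convex (suppSet G))
    rintro x hx
    obtain ⟨y, ⟨p, hp, rfl⟩, q, hq, rfl⟩ := Set.mem_add.mp hx
    have hpG : embed p ∈ lsh (suppSet G) := by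
      by_cases hG' : p ∈ suppSet G
      · exact mem_lsh_of_mem hG'
      · have hH' : p ∈ suppSet H := by
          simp only [suppSet, Set.mem_setOf_eq, not_not] at hG' ⊢
          intro h0
          apply hp
          show coef (G + H) p = 0
          rw [coef_add', hG', h0, add_zero]
        exact habove (mem_lsh_of_mem hH')
    exact hupG _ hpG q hq
  -- every vertex survives the addition
  have hvert : ∀ p, p ∈ suppSet G → embed p ∈ (lsh (suppSet G)).extremePoints ℝ →
      p ∈ suppSet (G + H) := by
    intro p hpG hpx
    by_contra h0
    simp only [suppSet, Set.mem_setOf_eq, not_not] at h0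
    rw [coef_add'] at h0
    have hpG' : coef G p ≠ 0 := hpG
    have hpH : p ∈ suppSet H := by
      show coef H p ≠ 0
      intro hH0
      exact hpG' (by linarith)
    have h1 : p ∈ lamV G H := ⟨hpx, hpH, h0⟩
    have h2 : p ∈ lamV H G :=
      ⟨extreme_mono habove (mem_lsh_of_mem hpH) hpx, hpG, by linarith⟩
    have : p ∈ lamV G H ∩ lamV H G := ⟨h1, h2⟩
    rw [hnv] at this
    exact Set.notMem_empty p this
  -- main induction on a finite generating set
  have main : ∀ n : ℕ, ∀ F : Finset (ℕ × ℕ), F.card = n → ↑F ⊆ suppSet G →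
      convexHull ℝ (embed '' ↑F + QQ) = lsh (suppSet G) →
      lsh (suppSet G) ⊆ lsh (suppSet (G + H)) := by
    intro n
    induction n using Nat.strong_induction_on with
    | _ n ih =>
      intro F hcard hFsub hFeq
      by_cases hex : ∃ m ∈ F, embed m ∉ (lsh (suppSet G)).extremePoints ℝ
      · obtain ⟨m, hmF, hmne⟩ := hex
        have hins : (↑F : Set (ℕ × ℕ)) = insert m ↑(F.erase m) := by
          rw [← Finset.coe_insert, Finset.insert_erase hmF]
        have hsplit : embed '' (↑F : Set (ℕ × ℕ)) + QQ
            = ({embed m} + QQ) ∪ (embed '' ↑(F.erase m) + QQ) := by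
          rw [hins, Set.image_insert_eq, Set.insert_eq, Set.union_add]
        have hne' : (F.erase m).Nonempty := by
          rcases Finset.eq_empty_or_nonempty (F.erase m) with he | hne
          · exfalso
            apply hmne
            have heq2 : lsh (suppSet G) = {embed m} + QQ := by
              rw [← hFeq, hsplit, he]
              simp only [Finset.coe_empty, Set.image_empty, Set.empty_add, Set.union_empty]
              exact (Convex.add (convex_singleton _) QQ_convex).convexHull_eq
            rw [heq2]
            exact corner_extreme _
          · exact hne
        have hup' : ∀ x ∈ convexHull ℝ (embed '' ↑(F.erase m) + QQ), ∀ q ∈ QQ,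
            x + q ∈ convexHull ℝ (embed '' ↑(F.erase m) + QQ) :=
          fun x hx q hq => addQ _ hx hq
        have hA'ne : (embed '' (↑(F.erase m) : Set (ℕ × ℕ)) + QQ).Nonempty := by
          obtain ⟨m', hm'⟩ := hne'
          exact ⟨embed m' + 0,
            Set.add_mem_add (Set.mem_image_of_mem _ (Finset.mem_coe.mpr hm')) QQ_zero⟩
        have hmem : embed m ∈ convexHull ℝ (embed '' ↑(F.erase m) + QQ) := by
          apply removal _ _ hA'ne hup'
          rw [← hsplit, hFeq]
          exact hmne
        have hnewEq : convexHull ℝ (embed '' ↑(F.erase m) + QQ) = lsh (suppSet G) := by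
          apply Set.Subset.antisymm
          · rw [← hFeq]
            exact convexHull_mono (by rw [hsplit]; exact Set.subset_union_right)
          · rw [← hFeq, hsplit]
            apply convexHull_min _ (convex_convexHull ℝ _)
            apply Set.union_subset
            · rintro x hx
              rw [Set.singleton_add] at hx
              obtain ⟨q, hq, rfl⟩ := hx
              exact addQ _ hmem hq
            · exact subset_convexHull ℝ _
        exact ih (F.erase m).card (by rw [← hcard]; exact Finset.card_erase_lt_of_mem hmF)
          (F.erase m) rfl (fun x hx => hFsub (Finset.erase_subset _ _ hx)) hnewEq
      · push_neg at hex
        rw [← hFeq]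
        apply convexHull_min _ (lsh_convex (suppSet (G + H)))
        rintro x hx
        obtain ⟨y, ⟨p, hp, rfl⟩, q, hq, rfl⟩ := Set.mem_add.mp hx
        have hpgood : p ∈ suppSet (G + H) :=
          hvert p (hFsub hp) (hex p (Finset.mem_coe.mp hp))
        have hmem2 : embed p ∈ lsh (suppSet (G + H)) := mem_lsh_of_mem hpgood
        rw [lsh_eq] at hmem2 ⊢
        exact addQ _ hmem2 hq
  -- conclude using the finite set of minimal points
  have hne := suppSet_nonempty hG
  have Mfin := minSet_finite (suppSet G) hne
  have hMco : (↑Mfin.toFinset : Set (ℕ × ℕ)) = minSet (suppSet G) := Mfin.coe_toFinset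
  have rev := main _ Mfin.toFinset rfl
    (by rw [hMco]; exact fun m hm => hm.1)
    (by rw [hMco]; exact hull_minSet _)
  exact Set.Subset.antisymm fwd rev
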